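/- A subshift $X \subset \Sigma^{\mathbb{Z}}$ has property $(D)$ if and only if the set $E(X) = \bigcap_{i\in\mathbb{Z}} \{x \in X : x_i \in \omega_1^+(x_{(-\infty,i)})\}$ is dense in $X$. -/

import Mathlib

open Set

/-- The shift map on bi-infinite sequences. -/
def shiftMap {A : Type*} (x : ℤ → A) : ℤ → A := fun i => x (i + 1)

/-- A subshift: a closed, shift-invariant subset of the full shift. -/
def IsSubshift {A : Type*} [TopologicalSpace A] (X : Set (ℤ → A)) : Prop :=
  IsClosed X ∧ ∀ x, x ∈ X ↔ shiftMap x ∈ X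

/-- Property (D): for every admissible word `bσ` (realized as `x_{(-m,0]}` together with
`x 1` for some `x ∈ X`) there is a left extension `a` (realized by a point `y ∈ X`
agreeing with `x` on `(-m,0]`, the word `ab` being `y_{(-k,0]}`) such that every
left-infinite past compatible with `ab` can be followed by `σ = x 1`. -/
def PropertyD {A : Type*} (X : Set (ℤ → A)) : Prop :=
  ∀ x ∈ X, ∀ m : ℕ, ∃ (k : ℕ) (y : ℤ → A), y ∈ X ∧ m ≤ k ∧
    (∀ j : ℤ, -(m : ℤ) < j → j ≤ 0 → y j = x j) ∧
    (∀ z ∈ X, (∀ j : ℤ, -(k : ℤ) < j → j ≤ 0 → z j = y j) →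
      ∃ z' ∈ X, (∀ i : ℤ, i ≤ 0 → z' i = z i) ∧ z' 1 = x 1)

/-- The set `E(X) = ⋂_{i ∈ ℤ} {x ∈ X : x i ∈ ω₁⁺(x_{(-∞,i)})}`, where
`x i ∈ ω₁⁺(x_{(-∞,i)})` means: there is `k` such that every point of `X` carrying the
word `x_{[i-k,i)}` (regardless of its more remote past) can be continued by the symbol
`x i` at position `i`. -/
def ESet {A : Type*} (X : Set (ℤ → A)) : Set (ℤ → A) :=
  X ∩ ⋂ i : ℤ, {x | ∃ k : ℕ, ∀ y ∈ X,
    (∀ j : ℤ, i - (k : ℤ) ≤ j → j < i → y j = x j) →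
    ∃ y' ∈ X, (∀ j : ℤ, j < i → y' j = y j) ∧ y' i = x i}

lemma shift_mem {A : Type*} [TopologicalSpace A] {X : Set (ℤ → A)} (hX : IsSubshift X) :
    ∀ t : ℤ, ∀ x ∈ X, (fun i => x (i + t)) ∈ X := by
  have h1 : ∀ x ∈ X, (fun i => x (i + 1)) ∈ X := fun x hx => (hX.2 x).mp hx
  have h2 : ∀ x ∈ X, (fun i => x (i - 1)) ∈ X := by
    intro x hx
    apply (hX.2 (fun i => x (i - 1))).mpr
    have : shiftMap (fun i => x (i - 1)) = x := by
      funext i; simp [shiftMap]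
    rw [this]; exact hx
  intro t
  induction t using Int.induction_on with
  | zero => intro x hx; simpa using hx
  | succ n ih =>
    intro x hx
    have := h1 _ (ih x hx)
    have he : (fun i => (fun i => x (i + (n:ℤ))) (i + 1)) = (fun i : ℤ => x (i + ((n:ℤ)+1))) := by
      funext i; show x (i + 1 + n) = x (i + (n+1)); congr 1; ring
    rwa [he] at this
  | pred n ih =>
    intro x hx
    have := h2 _ (ih x hx)
    have he : (fun i => (fun i => x (i + -(n:ℤ))) (i - 1)) = (fun i : ℤ => x (i + (-(n:ℤ)-1))) := by
      funext i; show x (i - 1 + -n) = x (i + (-n-1)); congr 1; ring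
    rwa [he] at this

lemma propD_at {A : Type*} [TopologicalSpace A] {X : Set (ℤ → A)} (hX : IsSubshift X)
    (hD : PropertyD X) (x : ℤ → A) (hx : x ∈ X) (p : ℤ) (m : ℕ) :
    ∃ (k : ℕ) (y : ℤ → A), y ∈ X ∧ m ≤ k ∧
      (∀ j : ℤ, p - 1 - m < j → j ≤ p - 1 → y j = x j) ∧
      (∀ z ∈ X, (∀ j : ℤ, p - 1 - k < j → j ≤ p - 1 → z j = y j) →
        ∃ z' ∈ X, (∀ i : ℤ, i ≤ p - 1 → z' i = z i) ∧ z' p = x p) := by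
  have hxt : (fun i => x (i + (p-1))) ∈ X := shift_mem hX (p-1) x hx
  obtain ⟨k, yt, hyt, hmk, hytx, hExt⟩ := hD _ hxt m
  refine ⟨k, fun i => yt (i - (p-1)), ?_, hmk, ?_, ?_⟩
  · have := shift_mem hX (-(p-1)) yt hyt
    have he : (fun i => yt (i + -(p-1))) = (fun i => yt (i - (p-1))) := by
      funext i; rfl
    rwa [he] at this
  · intro j h1 h2
    show yt (j - (p-1)) = x j
    have h3 := hytx (j - (p-1)) (by omega) (by omega)
    rw [h3, show j - (p-1) + (p-1) = j from by ring]
  · intro z hz hmatch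
    have hzt : (fun i => z (i + (p-1))) ∈ X := shift_mem hX (p-1) z hz
    have hm2 : ∀ j : ℤ, -(k:ℤ) < j → j ≤ 0 → (fun i => z (i + (p-1))) j = yt j := by
      intro j h1 h2
      show z (j + (p-1)) = yt j
      have h3 := hmatch (j + (p-1)) (by omega) (by omega)
      simp only at h3
      rw [h3, show j + (p-1) - (p-1) = j from by ring]
    obtain ⟨z't, hz't, hz'eq, hz'1⟩ := hExt _ hzt hm2
    refine ⟨fun i => z't (i - (p-1)), ?_, ?_, ?_⟩
    · have := shift_mem hX (-(p-1)) z't hz't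
      have he : (fun i => z't (i + -(p-1))) = (fun i => z't (i - (p-1))) := by
        funext i; rfl
      rwa [he] at this
    · intro i hi
      show z't (i - (p-1)) = z i
      have h3 := hz'eq (i - (p-1)) (by omega)
      rw [h3, show i - (p-1) + (p-1) = i from by ring]
    · show z't (p - (p-1)) = x p
      rw [show p - (p-1) = 1 from by ring, hz'1,
        show 1 + (p-1) = p from by ring]
/-- State of the inductive construction: a point `z ∈ X`, a certified interval `[l, r]`,
and a uniform left bound `c` for the witness regions. -/
structure DStat {A : Type*} (X : Set (ℤ → A)) (x : ℤ → A) (n : ℕ) where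
  z : ℤ → A
  l : ℤ
  r : ℤ
  c : ℤ
  hz : z ∈ X
  hlr : l ≤ r + 1
  hrn : (n : ℤ) ≤ r
  hcl : c ≤ l - 1
  hcn : c ≤ -(n : ℤ) - 1
  win : ∀ j : ℤ, -(n:ℤ) ≤ j → j ≤ n → z j = x j
  prop : ∀ i : ℤ, l ≤ i → i ≤ r → ∀ v ∈ X, (∀ j : ℤ, c ≤ j → j < i → v j = z j) →
    ∃ v' ∈ X, (∀ j : ℤ, j < i → v' j = v j) ∧ v' i = z i

lemma rebuild {A : Type*} {X : Set (ℤ → A)} {x : ℤ → A} {n : ℕ} (S : DStat X x n) :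
    ∀ (d : ℕ) (i₀ : ℤ), S.l - 1 ≤ i₀ → i₀ + d ≤ S.r →
    ∀ w ∈ X, (∀ j : ℤ, S.c ≤ j → j ≤ i₀ → w j = S.z j) →
    ∃ w' ∈ X, (∀ j : ℤ, j ≤ i₀ → w' j = w j) ∧
      (∀ j : ℤ, S.c ≤ j → j ≤ i₀ + d → w' j = S.z j) := by
  intro d
  induction d with
  | zero =>
    intro i₀ h1 h2 w hw hag
    exact ⟨w, hw, fun j _ => rfl, fun j hj hj2 => hag j hj (by omega)⟩
  | succ d ih =>
    intro i₀ h1 h2 w hw hag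
    obtain ⟨w', hw', hw'w, hw'z⟩ := ih i₀ h1 (by push_cast at h2 ⊢; omega) w hw hag
    obtain ⟨w'', hw'', hsub, hval⟩ := S.prop (i₀ + d + 1) (by omega)
      (by push_cast at h2; omega) w' hw' (fun j hj hj' => hw'z j hj (by omega))
    refine ⟨w'', hw'', fun j hj => by rw [hsub j (by omega), hw'w j hj], ?_⟩
    intro j hj hj2
    push_cast at hj2
    rcases (by omega : j ≤ i₀ + (d:ℤ) ∨ j = i₀ + d + 1) with h | h
    · rw [hsub j (by omega), hw'z j hj (by push_cast; omega)]
    · rw [h]; exact hval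

lemma stepL {A : Type*} [TopologicalSpace A] {X : Set (ℤ → A)} {x : ℤ → A} {n : ℕ}
    (hX : IsSubshift X) (hD : PropertyD X) (S : DStat X x n) :
    ∃ S' : DStat X x n, S'.l = S.l - 1 ∧ S'.r = S.r ∧ S'.c ≤ S.c - 1 ∧
      ∀ j : ℤ, S.c ≤ j → j ≤ S.r → S'.z j = S.z j := by
  obtain ⟨k, y, hy, hmk, hyz, hExt⟩ :=
    propD_at hX hD S.z S.hz (S.l - 1) ((S.l - 1 - S.c).toNat)
  have hcl := S.hcl
  have hlr := S.hlr
  have hmz : ((S.l - 1 - S.c).toNat : ℤ) = S.l - 1 - S.c := Int.toNat_of_nonneg (by omega)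
  have hkz : S.l - 1 - S.c ≤ (k : ℤ) := by omega
  have hyz' : ∀ j : ℤ, S.c ≤ j → j ≤ S.l - 2 → y j = S.z j := fun j h1 h2 =>
    hyz j (by omega) (by omega)
  obtain ⟨w, hw, hwy, hwi⟩ := hExt y hy (fun j _ _ => rfl)
  have hwz : ∀ j : ℤ, S.c ≤ j → j ≤ S.l - 1 → w j = S.z j := by
    intro j h1 h2
    rcases (by omega : j ≤ S.l - 2 ∨ j = S.l - 1) with h | h
    · rw [hwy j (by omega), hyz' j h1 h]
    · rw [h]; exact hwi
  have hdz : ((S.r - (S.l - 1)).toNat : ℤ) = S.r - (S.l - 1) := Int.toNat_of_nonneg (by omega)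
  obtain ⟨w', hw', hww, hwz'⟩ := rebuild S ((S.r - (S.l - 1)).toNat) (S.l - 1) (by omega)
    (by omega) w hw hwz
  have hwr : ∀ j : ℤ, S.c ≤ j → j ≤ S.r → w' j = S.z j := fun j h1 h2 =>
    hwz' j h1 (by omega)
  refine ⟨⟨w', S.l - 1, S.r, S.l - 2 - k, hw', by omega, S.hrn, by omega,
    by have := S.hcn; omega, ?_, ?_⟩, rfl, rfl,
    (by omega : S.l - 2 - (k:ℤ) ≤ S.c - 1), hwr⟩
  · intro j h1 h2
    rw [hwr j (by have := S.hcn; omega) (by have := S.hrn; omega)]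
    exact S.win j h1 h2
  · intro i' hi1 hi2 v hv hmatch
    rcases (by omega : i' = S.l - 1 ∨ S.l ≤ i') with h | h
    · subst h
      obtain ⟨v', hv', hvsub, hvval⟩ := hExt v hv (by
        intro j h1 h2
        rw [hmatch j (by omega) (by omega), hww j (by omega), hwy j h2])
      refine ⟨v', hv', fun j hj => hvsub j (by omega), ?_⟩
      rw [hvval, ← hwi, ← hww (S.l - 1) (by omega)]
    · obtain ⟨v', hv', hvsub, hvval⟩ := S.prop i' h hi2 v hv (by
        intro j h1 h2
        rw [hmatch j (by omega) h2, hwr j h1 (by omega)])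
      exact ⟨v', hv', hvsub, by rw [hvval, ← hwr i' (by omega) hi2]⟩

lemma stepR {A : Type*} [TopologicalSpace A] {X : Set (ℤ → A)} {x : ℤ → A} {n : ℕ}
    (hX : IsSubshift X) (hD : PropertyD X) (S : DStat X x n) :
    ∃ S' : DStat X x n, S'.l = S.l ∧ S'.r = S.r + 1 ∧ S'.c ≤ S.c - 1 ∧
      ∀ j : ℤ, S.c ≤ j → j ≤ S.r → S'.z j = S.z j := by
  obtain ⟨k, y, hy, hmk, hyz, hExt⟩ :=
    propD_at hX hD S.z S.hz (S.r + 1) ((S.r + 1 - S.c).toNat)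
  have hcl := S.hcl
  have hlr := S.hlr
  have hmz : ((S.r + 1 - S.c).toNat : ℤ) = S.r + 1 - S.c := Int.toNat_of_nonneg (by omega)
  have hkz : S.r + 1 - S.c ≤ (k : ℤ) := by omega
  have hyz' : ∀ j : ℤ, S.c ≤ j → j ≤ S.r → y j = S.z j := fun j h1 h2 =>
    hyz j (by omega) (by omega)
  obtain ⟨w, hw, hwy, hwi⟩ := hExt y hy (fun j _ _ => rfl)
  have hwz : ∀ j : ℤ, S.c ≤ j → j ≤ S.r + 1 → w j = S.z j := by
    intro j h1 h2
    rcases (by omega : j ≤ S.r ∨ j = S.r + 1) with h | h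
    · rw [hwy j (by omega), hyz' j h1 h]
    · rw [h]; exact hwi
  refine ⟨⟨w, S.l, S.r + 1, S.r - k, hw, by omega, by have := S.hrn; omega, by omega,
    by have := S.hcn; omega, ?_, ?_⟩, rfl, rfl,
    (by omega : S.r - (k:ℤ) ≤ S.c - 1),
    fun j h1 h2 => hwz j h1 (by omega)⟩
  · intro j h1 h2
    rw [hwz j (by have := S.hcn; omega) (by have := S.hrn; omega)]
    exact S.win j h1 h2
  · intro i' hi1 hi2 v hv hmatch
    rcases (by omega : i' = S.r + 1 ∨ i' ≤ S.r) with h | h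
    · subst h
      obtain ⟨v', hv', hvsub, hvval⟩ := hExt v hv (by
        intro j h1 h2
        rw [hmatch j (by omega) (by omega), hwy j h2])
      refine ⟨v', hv', fun j hj => hvsub j (by omega), ?_⟩
      rw [hvval, ← hwi]
    · obtain ⟨v', hv', hvsub, hvval⟩ := S.prop i' hi1 h v hv (by
        intro j h1 h2
        rw [hmatch j (by omega) h2, hwz j h1 (by omega)])
      exact ⟨v', hv', hvsub, by rw [hvval, ← hwz i' (by omega) (by omega)]⟩

lemma stepD {A : Type*} [TopologicalSpace A] {X : Set (ℤ → A)} {x : ℤ → A} {n : ℕ}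
    (hX : IsSubshift X) (hD : PropertyD X) (S : DStat X x n) :
    ∃ S' : DStat X x n, S'.l = S.l - 1 ∧ S'.r = S.r + 1 ∧ S'.c ≤ S.c - 1 ∧
      ∀ j : ℤ, S.c ≤ j → j ≤ S.r → S'.z j = S.z j := by
  obtain ⟨S₁, h1l, h1r, h1c, h1z⟩ := stepL hX hD S
  obtain ⟨S₂, h2l, h2r, h2c, h2z⟩ := stepR hX hD S₁
  exact ⟨S₂, by omega, by omega, by omega,
    fun j hj hj' => by rw [h2z j (by omega) (by omega), h1z j hj hj']⟩

def dinit {A : Type*} {X : Set (ℤ → A)} {x : ℤ → A} (hx : x ∈ X) (n : ℕ) : DStat X x n where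
  z := x
  l := (n : ℤ) + 1
  r := n
  c := -(n : ℤ) - 1
  hz := hx
  hlr := by omega
  hrn := le_refl _
  hcl := by omega
  hcn := le_refl _
  win := fun j _ _ => rfl
  prop := fun i h1 h2 => ((by omega : False)).elim

noncomputable def dseq {A : Type*} [TopologicalSpace A] {X : Set (ℤ → A)} {x : ℤ → A}
    (hX : IsSubshift X) (hD : PropertyD X) (hx : x ∈ X) (n : ℕ) : ℕ → DStat X x n :=
  fun t => Nat.rec (dinit hx n) (fun _ S => (stepD hX hD S).choose) t
lemma closed_limit {A : Type*} [TopologicalSpace A] [DiscreteTopology A]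
    {X : Set (ℤ → A)} (hX : IsClosed X) (z : ℕ → ℤ → A) (hz : ∀ t, z t ∈ X) (e : ℤ → A)
    (h : ∀ j : ℤ, ∃ T, ∀ t, T ≤ t → z t j = e j) : e ∈ X := by
  rw [← hX.closure_eq, mem_closure_iff]
  intro U hU heU
  rcases isOpen_pi_iff.mp hU e heU with ⟨I, u, hu, hsub⟩
  choose T hT using h
  refine ⟨z (I.sup T), hsub ?_, hz _⟩
  intro a ha
  rw [hT a (I.sup T) (Finset.le_sup ha)]
  exact (hu a ha).2

lemma exists_ESet_approx {A : Type*} [TopologicalSpace A] [DiscreteTopology A]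
    {X : Set (ℤ → A)} (hX : IsSubshift X) (hD : PropertyD X)
    (x : ℤ → A) (hx : x ∈ X) (n : ℕ) :
    ∃ e ∈ ESet X, ∀ j : ℤ, -(n:ℤ) ≤ j → j ≤ n → e j = x j := by
  classical
  set F : ℕ → DStat X x n := dseq hX hD hx n with hFdef
  have hstep : ∀ t, (F (t+1)).l = (F t).l - 1 ∧ (F (t+1)).r = (F t).r + 1 ∧
      (F (t+1)).c ≤ (F t).c - 1 ∧
      ∀ j : ℤ, (F t).c ≤ j → j ≤ (F t).r → (F (t+1)).z j = (F t).z j :=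
    fun t => (stepD hX hD (F t)).choose_spec
  have hF0 : F 0 = dinit hx n := rfl
  have hl : ∀ t, (F t).l = (n:ℤ) + 1 - t := by
    intro t
    induction t with
    | zero => rw [hF0]; simp [dinit]
    | succ t ih => rw [(hstep t).1, ih]; push_cast; ring
  have hr : ∀ t, (F t).r = (n:ℤ) + t := by
    intro t
    induction t with
    | zero => rw [hF0]; simp [dinit]
    | succ t ih => rw [(hstep t).2.1, ih]; push_cast; ring
  have hc : ∀ t, (F t).c ≤ -(n:ℤ) - 1 - t := by
    intro t
    induction t with
    | zero => rw [hF0]; simp [dinit]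
    | succ t ih => have := (hstep t).2.2.1; push_cast; omega
  have hcmono : ∀ s t, s ≤ t → (F t).c ≤ (F s).c := by
    intro s t h
    induction t, h using Nat.le_induction with
    | base => exact le_refl _
    | succ t ht ih => have := (hstep t).2.2.1; omega
  have hagree : ∀ s t, s ≤ t → ∀ j : ℤ, (F s).c ≤ j → j ≤ (F s).r →
      (F t).z j = (F s).z j := by
    intro s t h
    induction t, h using Nat.le_induction with
    | base => intro j _ _; rfl
    | succ t ht ih =>
      intro j h1 h2
      rw [(hstep t).2.2.2 j (le_trans (hcmono s t ht) h1)
        (by rw [hr]; rw [hr] at h2; omega)]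
      exact ih j h1 h2
  set T : ℤ → ℕ := fun j => j.natAbs + n + 1 with hTdef
  have hT : ∀ j : ℤ, (F (T j)).c ≤ j ∧ j ≤ (F (T j)).r := by
    intro j
    have h1 := hc (T j)
    have h2 := hr (T j)
    simp only [hTdef] at h1 h2 ⊢
    omega
  set e : ℤ → A := fun j => (F (T j)).z j with hedef
  have stab : ∀ t (j : ℤ), (F t).c ≤ j → j ≤ (F t).r → (F t).z j = e j := by
    intro t j h1 h2
    rcases le_total t (T j) with h | h
    · exact (hagree t (T j) h j h1 h2).symm
    · exact hagree (T j) t h j (hT j).1 (hT j).2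
  have heX : e ∈ X := by
    apply closed_limit hX.1 (fun t => (F t).z) (fun t => (F t).hz)
    intro j
    refine ⟨T j, fun t ht => ?_⟩
    apply stab
    · exact le_trans (hcmono (T j) t ht) (hT j).1
    · have h2 := (hT j).2
      rw [hr (T j)] at h2
      rw [hr t]
      have h3 : ((T j : ℕ) : ℤ) ≤ (t : ℤ) := by exact_mod_cast ht
      omega
  refine ⟨e, ⟨heX, ?_⟩, ?_⟩
  · rw [mem_iInter]
    intro i
    set t : ℕ := i.natAbs + n + 1 with htdef
    have hlt : (F t).l ≤ i := by rw [hl]; simp only [htdef]; omega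
    have hrt : i ≤ (F t).r := by rw [hr]; simp only [htdef]; omega
    have hct : (F t).c ≤ i - 1 := by have := (F t).hcl; omega
    refine ⟨(i - (F t).c).toNat, ?_⟩
    intro y hy hmatch
    have hkz : ((i - (F t).c).toNat : ℤ) = i - (F t).c := Int.toNat_of_nonneg (by omega)
    obtain ⟨y', hy', hsub, hval⟩ := (F t).prop i hlt hrt y hy (by
      intro j h1 h2
      rw [hmatch j (by omega) h2]
      exact (stab t j h1 (by omega)).symm)
    exact ⟨y', hy', hsub, by rw [hval]⟩
  · intro j h1 h2
    exact (F (T j)).win j h1 h2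
lemma cylinder_open {A : Type*} [TopologicalSpace A] [DiscreteTopology A]
    (x : ℤ → A) (s : Finset ℤ) :
    IsOpen {w : ℤ → A | ∀ j ∈ s, w j = x j} := by
  have : {w : ℤ → A | ∀ j ∈ s, w j = x j} =
      ⋂ j ∈ s, (fun w : ℤ → A => w j) ⁻¹' {x j} := by
    ext w; simp
  rw [this]
  exact isOpen_biInter_finset fun j _ =>
    (continuous_apply j).isOpen_preimage _ (isOpen_discrete _)


/-- A subshift has property (D) if and only if `E(X)` is dense in `X`. -/
theorem propertyD_iff_dense_ESet {A : Type*} [Fintype A] [TopologicalSpace A]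
    [DiscreteTopology A] (X : Set (ℤ → A)) (hX : IsSubshift X) :
    PropertyD X ↔ Dense (Subtype.val ⁻¹' ESet X : Set X) := by
  constructor
  · intro hD
    rw [dense_iff_inter_open]
    rintro U hU ⟨⟨x0, hx0⟩, hx0U⟩
    obtain ⟨V, hV, rfl⟩ := isOpen_induced_iff.mp hU
    have hx0V : x0 ∈ V := hx0U
    obtain ⟨I, u, hu, hsub⟩ := isOpen_pi_iff.mp hV x0 hx0V
    set n : ℕ := I.sup (fun a => a.natAbs) with hn
    obtain ⟨e, heE, hewin⟩ := exists_ESet_approx hX hD x0 hx0 n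
    refine ⟨⟨e, heE.1⟩, ?_, heE⟩
    show e ∈ V
    apply hsub
    intro a ha
    have hab : a.natAbs ≤ n := Finset.le_sup (f := fun a : ℤ => a.natAbs) ha
    rw [hewin a (by omega) (by omega)]
    exact (hu a ha).2
  · intro hDense x hx m
    set V : Set (ℤ → A) := {w | ∀ j ∈ Finset.Icc (1 - (m:ℤ)) 1, w j = x j} with hVdef
    have hV : IsOpen V := cylinder_open x _
    have hxV : (⟨x, hx⟩ : X) ∈ (Subtype.val ⁻¹' V : Set X) := by
      intro j _; rfl
    obtain ⟨⟨e, heX⟩, heU, heE⟩ := dense_iff_inter_open.mp hDense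
      (Subtype.val ⁻¹' V) (hV.preimage continuous_subtype_val) ⟨⟨x, hx⟩, hxV⟩
    have heV : ∀ j : ℤ, 1 - (m:ℤ) ≤ j → j ≤ 1 → e j = x j := by
      intro j h1 h2
      exact heU j (Finset.mem_Icc.mpr ⟨h1, h2⟩)
    have heE' : e ∈ ESet X := heE
    obtain ⟨k₀, hk₀⟩ : ∃ k₀ : ℕ, ∀ y ∈ X,
        (∀ j : ℤ, 1 - (k₀ : ℤ) ≤ j → j < 1 → y j = e j) →
        ∃ y' ∈ X, (∀ j : ℤ, j < 1 → y' j = y j) ∧ y' 1 = e 1 := by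
      have := heE'.2
      rw [mem_iInter] at this
      exact this 1
    refine ⟨max m k₀, e, heX, le_max_left _ _, ?_, ?_⟩
    · intro j h1 h2
      exact heV j (by omega) (by omega)
    · intro z hz hmatch
      obtain ⟨y', hy', hsub, hval⟩ := hk₀ z hz (by
        intro j h1 h2
        rw [hmatch j (by have := le_max_right m k₀; omega) (by omega)]
        )
      refine ⟨y', hy', fun i hi => hsub i (by omega), ?_⟩
      rw [hval]
      exact heV 1 (by omega) (by omega)
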